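/- For every r > 1 there exist constants C > 0 and M > 1 such that for all t > 0 and all x ∈ ℝ: ∫_{-∞}^{∞} t^{-1/2} exp(-|x-y|²/t) (1+|y|)^{-r} dy ≤ C[ min(t^{-1/2}, (1+|x|)^{-r}) + (1+√t)^{-1} exp(-|x|²/(M t)) ]. -/

import Mathlib

open MeasureTheory Real

lemma gauss_int (x b : ℝ) (hb : 0 < b) :
    ∫ y : ℝ, Real.exp (-(x - y)^2 / b) = Real.sqrt (π * b) := by
  have h1 : ∫ y : ℝ, Real.exp (-(x - y)^2 / b)
      = ∫ y : ℝ, Real.exp (-(1/b) * y^2) := by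
    rw [← integral_sub_left_eq_self (fun y : ℝ => Real.exp (-(1/b) * y^2)) volume x]
    congr 1; ext y; ring_nf
  rw [h1, integral_gaussian]
  congr 1
  field_simp

lemma gauss_integrable (x b : ℝ) (hb : 0 < b) :
    Integrable (fun y : ℝ => Real.exp (-(x - y)^2 / b)) := by
  have h : (fun y : ℝ => Real.exp (-(x - y)^2 / b))
      = fun y : ℝ => Real.exp (-(1/b) * (x - y)^2) := by
    ext y; ring_nf
  rw [h]
  exact (integrable_exp_neg_mul_sq (by positivity : (0:ℝ) < 1/b)).comp_sub_left x

lemma profile_integrable {r : ℝ} (hr : 1 < r) :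
    Integrable (fun y : ℝ => (1 + |y|) ^ (-r)) := by
  have h := integrable_one_add_norm (E := ℝ) (μ := volume) (r := r) (by simpa using hr)
  simpa [Real.norm_eq_abs] using h

lemma conv_bounds {r : ℝ} (hr : 1 < r) (c s x : ℝ) (hc : 0 < c) (hs : 0 ≤ s) :
    Integrable (fun y : ℝ => s * Real.exp (-(x - y)^2 / c) * (1 + |y|) ^ (-r)) ∧
    (∫ y : ℝ, s * Real.exp (-(x - y)^2 / c) * (1 + |y|) ^ (-r))
      ≤ s * (∫ y : ℝ, (1 + |y|) ^ (-r)) ∧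
    (∫ y : ℝ, s * Real.exp (-(x - y)^2 / c) * (1 + |y|) ^ (-r))
      ≤ s * Real.sqrt (π * c) := by
  have hg0 : ∀ y : ℝ, (0:ℝ) ≤ (1 + |y|) ^ (-r) := fun y =>
    Real.rpow_nonneg (by positivity) _
  have hg1 : ∀ y : ℝ, (1 + |y|) ^ (-r) ≤ 1 := fun y =>
    Real.rpow_le_one_of_one_le_of_nonpos (by simp [abs_nonneg]) (by linarith)
  have he1 : ∀ y : ℝ, Real.exp (-(x - y)^2 / c) ≤ 1 := fun y =>
    Real.exp_le_one_iff.2 (by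
      exact div_nonpos_of_nonpos_of_nonneg (neg_nonpos.2 (sq_nonneg _)) hc.le)
  have hf0 : ∀ y : ℝ, 0 ≤ s * Real.exp (-(x - y)^2 / c) * (1 + |y|) ^ (-r) := fun y => by
    have := hg0 y; positivity
  have hcont : Continuous (fun y : ℝ => s * Real.exp (-(x - y)^2 / c) * (1 + |y|) ^ (-r)) := by
    apply Continuous.mul
    · exact continuous_const.mul ((continuous_const.sub continuous_id).pow 2
        |>.neg.div_const c |>.rexp)
    · exact (continuous_const.add continuous_abs).rpow_const
        (fun y => Or.inl (by have := abs_nonneg y; simp only [Pi.add_apply]; linarith))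
  have hfint : Integrable (fun y : ℝ => s * Real.exp (-(x - y)^2 / c) * (1 + |y|) ^ (-r)) := by
    refine Integrable.mono' ((profile_integrable hr).const_mul s)
      hcont.aestronglyMeasurable (Filter.Eventually.of_forall fun y => ?_)
    rw [Real.norm_eq_abs, abs_of_nonneg (hf0 y)]
    nlinarith [mul_nonneg (mul_nonneg hs (hg0 y)) (sub_nonneg.2 (he1 y))]
  refine ⟨hfint, ?_, ?_⟩
  · calc (∫ y : ℝ, s * Real.exp (-(x - y)^2 / c) * (1 + |y|) ^ (-r))
        ≤ ∫ y : ℝ, s * (1 + |y|) ^ (-r) := by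
          apply integral_mono hfint ((profile_integrable hr).const_mul s)
          intro y
          simp only []
          nlinarith [mul_nonneg (mul_nonneg hs (hg0 y)) (sub_nonneg.2 (he1 y))]
      _ = s * ∫ y : ℝ, (1 + |y|) ^ (-r) := integral_const_mul s _
  · calc (∫ y : ℝ, s * Real.exp (-(x - y)^2 / c) * (1 + |y|) ^ (-r))
        ≤ ∫ y : ℝ, s * Real.exp (-(x - y)^2 / c) := by
          apply integral_mono hfint ((gauss_integrable x c hc).const_mul s)
          intro y
          simp only []
          nlinarith [mul_nonneg (mul_nonneg hs (Real.exp_nonneg (-(x - y)^2 / c)))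
            (sub_nonneg.2 (hg1 y))]
      _ = s * Real.sqrt (π * c) := by rw [integral_const_mul, gauss_int x c hc]

set_option maxHeartbeats 1000000 in
/-- Convolution of a heat-kernel Gaussian with an algebraically decaying profile. -/
theorem gaussian_conv_algebraic_min (r : ℝ) (hr : 1 < r) :
    ∃ C > (0:ℝ), ∃ M > (1:ℝ), ∀ t > (0:ℝ), ∀ x : ℝ,
      (∫ y : ℝ, t ^ (-(1:ℝ)/2) * Real.exp (-(x - y)^2 / t) * (1 + |y|) ^ (-r)) ≤
        C * (min (t ^ (-(1:ℝ)/2)) ((1 + |x|) ^ (-r)) +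
          (1 + Real.sqrt t)⁻¹ * Real.exp (-x^2 / (M * t))) := by
  set K : ℝ := ∫ y : ℝ, (1 + |y|) ^ (-r) with hKdef
  have hK0 : 0 ≤ K := integral_nonneg fun y => Real.rpow_nonneg (by positivity) _
  set A : ℝ := max ((2:ℝ)^r * Real.sqrt π) K with hAdef
  set B : ℝ := 2 * max K (Real.sqrt (2*π)) with hBdef
  have hA0 : 0 ≤ A := le_max_of_le_right hK0
  have hB0 : 0 ≤ B := mul_nonneg (by norm_num) (le_max_of_le_left hK0)
  clear_value A B
  refine ⟨A + B + 1, by linarith, 8, by norm_num, fun t ht x => ?_⟩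
  set ts := t ^ (-(1:ℝ)/2) with htsdef
  have hts0 : 0 < ts := Real.rpow_pos_of_pos ht _
  have hsqrt : 0 < Real.sqrt t := Real.sqrt_pos.2 ht
  have htssqrt : ts = (Real.sqrt t)⁻¹ := by
    rw [htsdef, Real.sqrt_eq_rpow, ← Real.rpow_neg ht.le]; norm_num
  obtain ⟨hint1, hb1K, hb1G⟩ := conv_bounds hr t ts x ht hts0.le
  obtain ⟨hint2, hb2K, hb2G⟩ := conv_bounds hr (2*t) ts x (by linarith) hts0.le
  rw [← hKdef] at hb1K hb2K
  clear_value K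
  clear_value ts
  have hsπ : ts * Real.sqrt (π * t) = Real.sqrt π := by
    rw [Real.sqrt_mul pi_pos.le, htssqrt]
    field_simp
  have hs2π : ts * Real.sqrt (π * (2*t)) = Real.sqrt (2*π) := by
    have h : π * (2*t) = (2*π) * t := by ring
    rw [h, Real.sqrt_mul (by positivity), htssqrt]
    field_simp
  have hg0 : ∀ y : ℝ, (0:ℝ) ≤ (1 + |y|) ^ (-r) := fun y =>
    Real.rpow_nonneg (by positivity) _
  have hf0 : ∀ y : ℝ, 0 ≤ ts * Real.exp (-(x - y)^2 / t) * (1 + |y|) ^ (-r) := fun y =>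
    mul_nonneg (mul_nonneg hts0.le (Real.exp_nonneg _)) (hg0 y)
  set S : Set ℝ := {y : ℝ | |x|/2 ≤ |y|} with hSdef
  have hSm : MeasurableSet S := measurableSet_le measurable_const measurable_id.abs
  have hsplit : (∫ y : ℝ, ts * Real.exp (-(x - y)^2 / t) * (1 + |y|) ^ (-r))
      = (∫ y in S, ts * Real.exp (-(x - y)^2 / t) * (1 + |y|) ^ (-r))
        + ∫ y in Sᶜ, ts * Real.exp (-(x - y)^2 / t) * (1 + |y|) ^ (-r) :=
    (integral_add_compl hSm hint1).symm
  -- piece 1, bound (a)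
  have hp1a : (∫ y in S, ts * Real.exp (-(x - y)^2 / t) * (1 + |y|) ^ (-r)) ≤ ts * K :=
    le_trans (setIntegral_le_integral hint1 (Filter.Eventually.of_forall hf0)) hb1K
  -- piece 1, bound (b)
  have hhalf : ((1:ℝ) + |x|/2) ^ (-r) ≤ 2^r * (1 + |x|) ^ (-r) := by
    have h1 : ((1:ℝ) + |x|/2) ^ (-r) ≤ ((1 + |x|)/2) ^ (-r) :=
      Real.rpow_le_rpow_of_nonpos (by positivity) (by linarith [abs_nonneg x]) (by linarith)
    have h2 : (((1:ℝ) + |x|)/2) ^ (-r) = 2^r * (1 + |x|) ^ (-r) := by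
      rw [Real.div_rpow (by positivity) (by norm_num : (0:ℝ) ≤ 2),
        Real.rpow_neg (by norm_num : (0:ℝ) ≤ 2), div_eq_mul_inv, inv_inv, mul_comm]
    linarith
  have hp1b : (∫ y in S, ts * Real.exp (-(x - y)^2 / t) * (1 + |y|) ^ (-r))
      ≤ (2^r * Real.sqrt π) * (1 + |x|) ^ (-r) := by
    have hgS : ∀ y ∈ S, ((1:ℝ) + |y|) ^ (-r) ≤ (1 + |x|/2) ^ (-r) := fun y hy =>
      Real.rpow_le_rpow_of_nonpos (by positivity) (by
        have : |x|/2 ≤ |y| := hy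
        linarith) (by linarith)
    calc (∫ y in S, ts * Real.exp (-(x - y)^2 / t) * (1 + |y|) ^ (-r))
        ≤ ∫ y in S, (ts * (1 + |x|/2) ^ (-r)) * Real.exp (-(x - y)^2 / t) := by
          apply setIntegral_mono_on hint1.integrableOn
            (((gauss_integrable x t ht).const_mul _).integrableOn) hSm
          intro y hy
          have h1 := hgS y hy
          have h2 := Real.exp_nonneg (-(x - y)^2 / t)
          nlinarith [mul_le_mul_of_nonneg_left h1 (mul_nonneg hts0.le h2)]
      _ ≤ ∫ y : ℝ, (ts * (1 + |x|/2) ^ (-r)) * Real.exp (-(x - y)^2 / t) := by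
          apply setIntegral_le_integral ((gauss_integrable x t ht).const_mul _)
          apply Filter.Eventually.of_forall
          intro y
          have h3 : (0:ℝ) ≤ (1 + |x|/2) ^ (-r) := Real.rpow_nonneg (by positivity) _
          exact mul_nonneg (mul_nonneg hts0.le h3) (Real.exp_nonneg _)
      _ = ts * (1 + |x|/2) ^ (-r) * Real.sqrt (π * t) := by
          rw [integral_const_mul, gauss_int x t ht]
      _ = (1 + |x|/2) ^ (-r) * (ts * Real.sqrt (π * t)) := by ring
      _ = (1 + |x|/2) ^ (-r) * Real.sqrt π := by rw [hsπ]
      _ ≤ (2^r * (1 + |x|) ^ (-r)) * Real.sqrt π :=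
          mul_le_mul_of_nonneg_right hhalf (Real.sqrt_nonneg _)
      _ = (2^r * Real.sqrt π) * (1 + |x|) ^ (-r) := by ring
  -- piece 1 combined
  have hmin0 : 0 ≤ min ts ((1 + |x|) ^ (-r)) := le_min hts0.le (hg0 x)
  have hp1 : (∫ y in S, ts * Real.exp (-(x - y)^2 / t) * (1 + |y|) ^ (-r))
      ≤ A * min ts ((1 + |x|) ^ (-r)) := by
    rcases min_cases ts ((1 + |x|) ^ (-r)) with ⟨hm, _⟩ | ⟨hm, _⟩
    · rw [hm]
      calc _ ≤ ts * K := hp1a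
        _ = K * ts := by ring
        _ ≤ A * ts := mul_le_mul_of_nonneg_right (hAdef ▸ le_max_right ((2:ℝ)^r * Real.sqrt π) K) hts0.le
    · rw [hm]
      exact le_trans hp1b
        (mul_le_mul_of_nonneg_right (hAdef ▸ le_max_left ((2:ℝ)^r * Real.sqrt π) K) (hg0 x))
  -- piece 2
  have hcomp : ∀ y ∈ Sᶜ, ts * Real.exp (-(x - y)^2 / t) * (1 + |y|) ^ (-r)
      ≤ Real.exp (-x^2 / (8*t)) * (ts * Real.exp (-(x - y)^2 / (2*t)) * (1 + |y|) ^ (-r)) := by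
    intro y hy
    have hy' : |y| < |x|/2 := not_le.1 hy
    have hxy : |x|/2 ≤ |x - y| := by
      have h := abs_sub_abs_le_abs_sub x y
      linarith
    have hsq : x^2/4 ≤ (x - y)^2 := by
      have h0 : (0:ℝ) ≤ |x|/2 := by positivity
      calc x^2/4 = (|x|/2)^2 := by rw [div_pow, sq_abs]; norm_num
        _ ≤ |x - y|^2 := pow_le_pow_left₀ h0 hxy 2
        _ = (x - y)^2 := sq_abs _
    have hee : Real.exp (-(x - y)^2 / t)
        ≤ Real.exp (-x^2 / (8*t)) * Real.exp (-(x - y)^2 / (2*t)) := by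
      rw [← Real.exp_add]
      apply Real.exp_le_exp.2
      have e1 : -(x - y)^2/t = -(x - y)^2/(2*t) + -(x - y)^2/(2*t) := by
        field_simp
        ring
      have e2 : -(x - y)^2/(2*t) ≤ -x^2/(8*t) := by
        rw [div_le_div_iff₀ (by positivity) (by positivity)]
        have := mul_le_mul_of_nonneg_right hsq (by positivity : (0:ℝ) ≤ 8*t)
        nlinarith
      linarith
    have h1 := mul_le_mul_of_nonneg_left hee hts0.le
    have h2 := mul_le_mul_of_nonneg_right h1 (hg0 y)
    calc ts * Real.exp (-(x - y)^2 / t) * (1 + |y|) ^ (-r)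
        ≤ ts * (Real.exp (-x^2 / (8*t)) * Real.exp (-(x - y)^2 / (2*t))) * (1 + |y|) ^ (-r) := h2
      _ = Real.exp (-x^2 / (8*t)) * (ts * Real.exp (-(x - y)^2 / (2*t)) * (1 + |y|) ^ (-r)) := by
          ring
  have hJ : (∫ y : ℝ, ts * Real.exp (-(x - y)^2 / (2*t)) * (1 + |y|) ^ (-r))
      ≤ B * (1 + Real.sqrt t)⁻¹ := by
    have hb2G' : (∫ y : ℝ, ts * Real.exp (-(x - y)^2 / (2*t)) * (1 + |y|) ^ (-r))
        ≤ Real.sqrt (2*π) := hb2G.trans_eq hs2π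
    rcases le_total t 1 with hle | hle
    · have h1 : Real.sqrt t ≤ 1 := by
        rw [show (1:ℝ) = Real.sqrt 1 by simp]
        exact Real.sqrt_le_sqrt hle
      have h2 : (2:ℝ)⁻¹ ≤ (1 + Real.sqrt t)⁻¹ := by
        apply inv_anti₀ (by positivity)
        linarith
      calc _ ≤ Real.sqrt (2*π) := hb2G'
        _ ≤ max K (Real.sqrt (2*π)) := le_max_right _ _
        _ = B * 2⁻¹ := by rw [hBdef]; ring
        _ ≤ B * (1 + Real.sqrt t)⁻¹ := mul_le_mul_of_nonneg_left h2 hB0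
    · have h1 : (1:ℝ) ≤ Real.sqrt t := by
        rw [show (1:ℝ) = Real.sqrt 1 by simp]
        exact Real.sqrt_le_sqrt hle
      have h2 : (2 * Real.sqrt t)⁻¹ ≤ (1 + Real.sqrt t)⁻¹ := by
        apply inv_anti₀ (by positivity)
        linarith
      calc _ ≤ ts * K := hb2K
        _ = K * (Real.sqrt t)⁻¹ := by rw [htssqrt]; ring
        _ ≤ max K (Real.sqrt (2*π)) * (Real.sqrt t)⁻¹ :=
            mul_le_mul_of_nonneg_right (le_max_left _ _) (by positivity)
        _ = B * (2 * Real.sqrt t)⁻¹ := by rw [hBdef, mul_inv]; ring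
        _ ≤ B * (1 + Real.sqrt t)⁻¹ := mul_le_mul_of_nonneg_left h2 hB0
  have hp2 : (∫ y in Sᶜ, ts * Real.exp (-(x - y)^2 / t) * (1 + |y|) ^ (-r))
      ≤ B * ((1 + Real.sqrt t)⁻¹ * Real.exp (-x^2 / (8*t))) := by
    calc (∫ y in Sᶜ, ts * Real.exp (-(x - y)^2 / t) * (1 + |y|) ^ (-r))
        ≤ ∫ y in Sᶜ, Real.exp (-x^2 / (8*t))
            * (ts * Real.exp (-(x - y)^2 / (2*t)) * (1 + |y|) ^ (-r)) :=
          setIntegral_mono_on hint1.integrableOn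
            ((hint2.const_mul _).integrableOn) hSm.compl hcomp
      _ ≤ ∫ y : ℝ, Real.exp (-x^2 / (8*t))
            * (ts * Real.exp (-(x - y)^2 / (2*t)) * (1 + |y|) ^ (-r)) := by
          apply setIntegral_le_integral (hint2.const_mul _)
          apply Filter.Eventually.of_forall
          intro y
          exact mul_nonneg (Real.exp_nonneg _)
            (mul_nonneg (mul_nonneg hts0.le (Real.exp_nonneg _)) (hg0 y))
      _ = Real.exp (-x^2 / (8*t))
            * ∫ y : ℝ, ts * Real.exp (-(x - y)^2 / (2*t)) * (1 + |y|) ^ (-r) :=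
          integral_const_mul _ _
      _ ≤ Real.exp (-x^2 / (8*t)) * (B * (1 + Real.sqrt t)⁻¹) :=
          mul_le_mul_of_nonneg_left hJ (Real.exp_nonneg _)
      _ = B * ((1 + Real.sqrt t)⁻¹ * Real.exp (-x^2 / (8*t))) := by ring
  -- combine
  have hq0 : 0 ≤ (1 + Real.sqrt t)⁻¹ * Real.exp (-x^2 / (8*t)) :=
    mul_nonneg (by positivity) (Real.exp_nonneg _)
  rw [hsplit]
  calc (∫ y in S, ts * Real.exp (-(x - y)^2 / t) * (1 + |y|) ^ (-r))
        + (∫ y in Sᶜ, ts * Real.exp (-(x - y)^2 / t) * (1 + |y|) ^ (-r))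
      ≤ A * min ts ((1 + |x|) ^ (-r))
        + B * ((1 + Real.sqrt t)⁻¹ * Real.exp (-x^2 / (8*t))) := add_le_add hp1 hp2
    _ ≤ (A + B + 1) * (min ts ((1 + |x|) ^ (-r))
        + (1 + Real.sqrt t)⁻¹ * Real.exp (-x^2 / (8*t))) := by
      nlinarith [mul_nonneg hB0 hmin0, mul_nonneg hA0 hq0, hmin0, hq0]
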